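/- Let (Y, d^×) be a pseudometric space equipped with an ℝ-action (r,x) ↦ r⁺x such that every orbit map r ↦ r⁺x is non-expanding (d^×(r₁⁺x, r₂⁺x) ≤ |r₁-r₂|) and the action satisfies (r+s)⁺x = r⁺(s⁺x). Define d_*(x,y) := ∫_{-∞}^{∞} d^×(r⁺x, r⁺y)·(e^{-|r|}/2) dr. Then: (a) d_* is a well-defined pseudometric with d_*(x,y) ≤ d^×(x,y) + 2 and d_*(x,y) ≥ d^×(x,y) - 2; (b) for each r ∈ ℝ, the map x ↦ r⁺x is bi-Lipschitz with respect to d_* with constant e^{|r|}. -/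

import Mathlib

open MeasureTheory

/-- The averaged pseudometric d_*(x,y) := ∫ d^×(r⁺x, r⁺y)·(e^{-|r|}/2) dr,
where the ℝ-action is given by T. -/
noncomputable def dstar {Y : Type*} [PseudoMetricSpace Y]
    (T : ℝ → Y → Y) (x y : Y) : ℝ :=
  ∫ r : ℝ, dist (T r x) (T r y) * (Real.exp (-|r|) / 2)

open Set Real

private lemma integrable_comp_abs' {f : ℝ → ℝ} (hf : IntegrableOn f (Ioi 0)) :
    Integrable (fun x : ℝ => f |x|) := by
  have hIoi : IntegrableOn (fun x : ℝ => f |x|) (Ioi 0) := by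
    apply hf.congr_fun _ measurableSet_Ioi
    intro x hx
    show f x = f |x|
    rw [abs_of_pos hx]
  have hIic : IntegrableOn (fun x : ℝ => f |x|) (Iic 0) := by
    rw [← Measure.map_neg_eq_self (volume : Measure ℝ)]
    have m : MeasurableEmbedding fun x : ℝ => -x :=
      (Homeomorph.neg ℝ).measurableEmbedding
    rw [m.integrableOn_map_iff]
    simp_rw [Function.comp_def, abs_neg, neg_preimage, neg_Iic, neg_zero]
    exact Iff.mpr integrableOn_Ici_iff_integrableOn_Ioi hIoi
  have : IntegrableOn (fun x : ℝ => f |x|) (Iic 0 ∪ Ioi 0) := hIic.union hIoi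
  rwa [Iic_union_Ioi, integrableOn_univ] at this

private lemma intOn_exp : IntegrableOn (fun t : ℝ => Real.exp (-t)) (Ioi 0) := by
  simpa using exp_neg_integrableOn_Ioi 0 one_pos

private lemma int_exp_abs : Integrable (fun r : ℝ => Real.exp (-|r|)) :=
  integrable_comp_abs' intOn_exp

private lemma intOn_mul_exp : IntegrableOn (fun t : ℝ => t * Real.exp (-t)) (Ioi 0) := by
  have h := Real.GammaIntegral_convergent (by norm_num : (0:ℝ) < 2)
  apply h.congr_fun _ measurableSet_Ioi
  intro x hx
  simp only [show (2:ℝ) - 1 = 1 by norm_num, Real.rpow_one]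
  ring

private lemma int_abs_exp_abs : Integrable (fun r : ℝ => |r| * Real.exp (-|r|)) :=
  integrable_comp_abs' intOn_mul_exp

private lemma E1 : (∫ r : ℝ, Real.exp (-|r|)) = 2 := by
  rw [integral_comp_abs (f := fun t => Real.exp (-t)), integral_exp_neg_Ioi_zero, mul_one]

private lemma E2 : (∫ r : ℝ, |r| * Real.exp (-|r|)) = 2 := by
  rw [integral_comp_abs (f := fun t => t * Real.exp (-t))]
  have hG : Real.Gamma 2 = ∫ x in Ioi (0:ℝ), Real.exp (-x) * x ^ ((2:ℝ) - 1) :=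
    Real.Gamma_eq_integral (by norm_num)
  have h2 : Real.Gamma 2 = 1 := by
    rw [show (2:ℝ) = (1:ℕ) + 1 by norm_num, Real.Gamma_nat_eq_factorial]
    simp
  have : (∫ x in Ioi (0:ℝ), x * Real.exp (-x)) = 1 := by
    rw [← h2, hG]
    apply setIntegral_congr_fun measurableSet_Ioi
    intro x _
    simp only [show (2:ℝ) - 1 = 1 by norm_num, Real.rpow_one]
    ring
  rw [this]; norm_num

theorem dstar_pseudometric_and_biLipschitz {Y : Type*} [PseudoMetricSpace Y]
    (T : ℝ → Y → Y)
    (h0 : ∀ x, T 0 x = x)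
    (hadd : ∀ (r s : ℝ) (x : Y), T (r + s) x = T r (T s x))
    (horb : ∀ (x : Y) (r₁ r₂ : ℝ), dist (T r₁ x) (T r₂ x) ≤ |r₁ - r₂|) :
    (∀ x y : Y,
      Integrable (fun r : ℝ => dist (T r x) (T r y) * (Real.exp (-|r|) / 2))) ∧
    (∀ x y : Y, dstar T x y = dstar T y x) ∧
    (∀ x y z : Y, dstar T x z ≤ dstar T x y + dstar T y z) ∧
    (∀ x : Y, dstar T x x = 0) ∧
    (∀ x y : Y, dstar T x y ≤ dist x y + 2 ∧ dist x y - 2 ≤ dstar T x y) ∧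
    (∀ (r : ℝ) (x y : Y),
      dstar T (T r x) (T r y) ≤ Real.exp |r| * dstar T x y ∧
      dstar T x y ≤ Real.exp |r| * dstar T (T r x) (T r y)) := by
  -- pointwise bounds
  have hub : ∀ (x y : Y) (r : ℝ), dist (T r x) (T r y) ≤ dist x y + 2 * |r| := by
    intro x y r
    have h1 : dist (T r x) x ≤ |r| := by
      simpa [h0] using horb x r 0
    have h2 : dist y (T r y) ≤ |r| := by
      simpa [h0] using horb y 0 r
    calc dist (T r x) (T r y)
        ≤ dist (T r x) x + dist x y + dist y (T r y) := dist_triangle4 _ _ _ _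
      _ ≤ |r| + dist x y + |r| := by gcongr
      _ = dist x y + 2 * |r| := by ring
  have hlb : ∀ (x y : Y) (r : ℝ), dist x y - 2 * |r| ≤ dist (T r x) (T r y) := by
    intro x y r
    have h1 : dist x (T r x) ≤ |r| := by
      simpa [h0] using horb x 0 r
    have h2 : dist (T r y) y ≤ |r| := by
      simpa [h0] using horb y r 0
    have : dist x y ≤ dist x (T r x) + dist (T r x) (T r y)
        + dist (T r y) y := dist_triangle4 _ _ _ _
    linarith
  -- continuity of the integrand
  have hcont : ∀ x y : Y, Continuous (fun r : ℝ => dist (T r x) (T r y)) := by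
    intro x y
    have : LipschitzWith 2 (fun r : ℝ => dist (T r x) (T r y)) := by
      apply LipschitzWith.of_dist_le_mul
      intro r₁ r₂
      calc dist (dist (T r₁ x) (T r₁ y)) (dist (T r₂ x) (T r₂ y))
          ≤ dist (T r₁ x) (T r₂ x) + dist (T r₁ y) (T r₂ y) := dist_dist_dist_le _ _ _ _
        _ ≤ |r₁ - r₂| + |r₁ - r₂| := add_le_add (horb x r₁ r₂) (horb y r₁ r₂)
        _ = 2 * dist r₁ r₂ := by rw [Real.dist_eq]; ring
    exact this.continuous
  -- integrability
  have hInt : ∀ x y : Y,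
      Integrable (fun r : ℝ => dist (T r x) (T r y) * (Real.exp (-|r|) / 2)) := by
    intro x y
    have hg : Integrable (fun r : ℝ =>
        dist x y / 2 * Real.exp (-|r|) + |r| * Real.exp (-|r|)) :=
      (int_exp_abs.const_mul _).add int_abs_exp_abs
    apply hg.mono'
    · exact ((hcont x y).mul (by continuity)).aestronglyMeasurable
    · filter_upwards with r
      have hd0 : (0:ℝ) ≤ dist (T r x) (T r y) := dist_nonneg
      have he : (0:ℝ) < Real.exp (-|r|) := Real.exp_pos _
      rw [Real.norm_eq_abs, abs_of_nonneg (by positivity)]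
      have := hub x y r
      nlinarith
  refine ⟨hInt, ?_, ?_, ?_, ?_, ?_⟩
  · -- symmetry
    intro x y
    exact integral_congr_ae (Filter.Eventually.of_forall fun r => by dsimp only; rw [dist_comm])
  · -- triangle
    intro x y z
    show dstar T x z ≤ dstar T x y + dstar T y z
    unfold dstar
    rw [← integral_add (hInt x y) (hInt y z)]
    apply integral_mono (hInt x z) ((hInt x y).add (hInt y z))
    intro r
    simp only [Pi.add_apply]
    rw [← add_mul]
    exact mul_le_mul_of_nonneg_right (dist_triangle _ _ _) (by positivity)
  · intro x
    simp [dstar, dist_self]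
  · -- comparison with dist ± 2
    intro x y
    have hgu : Integrable (fun r : ℝ =>
        dist x y / 2 * Real.exp (-|r|) + |r| * Real.exp (-|r|)) :=
      (int_exp_abs.const_mul _).add int_abs_exp_abs
    have hgl : Integrable (fun r : ℝ =>
        dist x y / 2 * Real.exp (-|r|) - |r| * Real.exp (-|r|)) :=
      (int_exp_abs.const_mul _).sub int_abs_exp_abs
    have hintu : (∫ r : ℝ, (dist x y / 2 * Real.exp (-|r|) + |r| * Real.exp (-|r|)))
        = dist x y + 2 := by
      rw [integral_add (int_exp_abs.const_mul _) int_abs_exp_abs,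
        integral_const_mul, E1, E2]
      ring
    have hintl : (∫ r : ℝ, (dist x y / 2 * Real.exp (-|r|) - |r| * Real.exp (-|r|)))
        = dist x y - 2 := by
      rw [integral_sub (int_exp_abs.const_mul _) int_abs_exp_abs,
        integral_const_mul, E1, E2]
      ring
    constructor
    · rw [← hintu]
      apply integral_mono (hInt x y) hgu
      intro r
      dsimp only
      have he : (0:ℝ) < Real.exp (-|r|) := Real.exp_pos _
      have := hub x y r
      nlinarith
    · rw [← hintl]
      apply integral_mono hgl (hInt x y)
      intro r
      dsimp only
      have he : (0:ℝ) < Real.exp (-|r|) := Real.exp_pos _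
      have := hlb x y r
      nlinarith
  · -- bi-Lipschitz
    have key : ∀ (s : ℝ) (x y : Y),
        dstar T (T s x) (T s y) ≤ Real.exp |s| * dstar T x y := by
      intro s x y
      have hptw : ∀ r : ℝ,
          dist (T r (T s x)) (T r (T s y)) * (Real.exp (-|r|) / 2) ≤
          Real.exp |s| *
            (dist (T (r + s) x) (T (r + s) y) * (Real.exp (-|r + s|) / 2)) := by
        intro r
        rw [← hadd, ← hadd]
        have he : Real.exp (-|r|) ≤ Real.exp |s| * Real.exp (-|r + s|) := by
          rw [← Real.exp_add]
          apply Real.exp_le_exp.mpr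
          have := abs_add_le r s
          linarith
        have hd0 : (0:ℝ) ≤ dist (T (r + s) x) (T (r + s) y) := dist_nonneg
        nlinarith [Real.exp_pos (-|r + s|)]
      have hrhs : Integrable (fun r : ℝ => Real.exp |s| *
          (dist (T (r + s) x) (T (r + s) y) * (Real.exp (-|r + s|) / 2))) :=
        ((hInt x y).comp_add_right s).const_mul _
      calc dstar T (T s x) (T s y)
          ≤ ∫ r : ℝ, Real.exp |s| *
              (dist (T (r + s) x) (T (r + s) y) * (Real.exp (-|r + s|) / 2)) :=
            integral_mono (hInt (T s x) (T s y)) hrhs hptw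
        _ = Real.exp |s| * ∫ r : ℝ,
              dist (T (r + s) x) (T (r + s) y) * (Real.exp (-|r + s|) / 2) :=
            integral_const_mul _ _
        _ = Real.exp |s| * dstar T x y := by
            rw [integral_add_right_eq_self
              (fun u : ℝ => dist (T u x) (T u y) * (Real.exp (-|u|) / 2)) s]
            rfl
    intro r x y
    refine ⟨key r x y, ?_⟩
    have h := key (-r) (T r x) (T r y)
    have hx : T (-r) (T r x) = x := by rw [← hadd, neg_add_cancel, h0]
    have hy : T (-r) (T r y) = y := by rw [← hadd, neg_add_cancel, h0]
    rwa [hx, hy, abs_neg] at h
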